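/- Let g be C^1, even, convex with g' strictly increasing, odd, and unbounded. Fix V₁ > 0. Then P₃ − P₂ < 0 for all sufficiently large V₂ ≥ V₁; i.e., the triple interval beats the double interval in equilibrium when V₂ is large. -/

import Mathlib

/-- Tangent line inequality for a differentiable function with strictly
monotone derivative. -/
private lemma tangent_line (g : ℝ → ℝ) (hd : Differentiable ℝ g)
    (hmono : StrictMono (deriv g)) (x y : ℝ) :
    g y + deriv g y * (x - y) ≤ g x := by
  rcases lt_trichotomy x y with h | h | h
  · obtain ⟨c, hc, hceq⟩ := exists_deriv_eq_slope g h
      (hd.continuous.continuousOn) (hd.differentiableOn)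
    have hne : y - x ≠ 0 := sub_ne_zero.mpr h.ne'
    rw [eq_div_iff hne] at hceq
    nlinarith [hmono hc.2]
  · simp [h]
  · obtain ⟨c, hc, hceq⟩ := exists_deriv_eq_slope g h
      (hd.continuous.continuousOn) (hd.differentiableOn)
    have hne : x - y ≠ 0 := sub_ne_zero.mpr h.ne'
    rw [eq_div_iff hne] at hceq
    nlinarith [hmono hc.1]

/-- Fixed `V₁`, large `V₂`: for a `C¹` even convex density `g` in volume coordinates
with `g'` strictly increasing, odd and unbounded, the triple interval beats the double
interval in equilibrium once `V₂` is sufficiently large. -/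
theorem triple_better_for_large_V2 (g : ℝ → ℝ) (hg : ContDiff ℝ 1 g)
    (hg_even : ∀ v, g (-v) = g v) (hg_convex : ConvexOn ℝ Set.univ g)
    (hg' : StrictMono (deriv g)) (hg'_odd : ∀ v, deriv g (-v) = -deriv g v)
    (hg'_unbdd : ∀ c : ℝ, ∃ x, c < deriv g x)
    (V₁ : ℝ) (hV₁ : 0 < V₁) :
    ∃ V₀ : ℝ, ∀ V₂, V₁ ≤ V₂ → V₀ ≤ V₂ → ∀ Vt : ℝ,
      deriv g Vt + deriv g (Vt + V₁) + deriv g (Vt + V₁ + V₂) = 0 →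
      2 * (g (V₁ / 2) + g ((V₁ + V₂) / 2)) <
        g Vt + g (Vt + V₁) + g (Vt + V₁ + V₂) := by
  have hd : Differentiable ℝ g := hg.differentiable one_ne_zero
  have tang := tangent_line g hd hg'
  have h0 : deriv g 0 = 0 := by
    have := hg'_odd 0; rw [neg_zero] at this; linarith
  have h1 : 0 < deriv g 1 := by
    have := hg' (show (0:ℝ) < 1 by norm_num); rwa [h0] at this
  set A : ℝ := max 1 (1 + (2 * g (V₁ / 2) + 1 - g 1) / deriv g 1) with hA
  have hA1 : (1:ℝ) ≤ A := le_max_left _ _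
  have hA0 : (0:ℝ) < A := lt_of_lt_of_le one_pos hA1
  have hgA : 2 * g (V₁ / 2) < g A := by
    have ht := tang A 1
    have h2 : (2 * g (V₁ / 2) + 1 - g 1) / deriv g 1 ≤ A - 1 := by
      have := le_max_right 1 (1 + (2 * g (V₁ / 2) + 1 - g 1) / deriv g 1)
      rw [← hA] at this; linarith
    have h3 := (div_le_iff₀ h1).mp h2
    nlinarith
  have hgA' : 0 < deriv g A := by
    have := hg' hA0; rwa [h0] at this
  obtain ⟨x₀, hx₀⟩ := hg'_unbdd (deriv g A + deriv g (A + V₁))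
  refine ⟨x₀ + A, fun V₂ hV12 hV0 Vt heq => ?_⟩
  -- Step 1: Vt + V₁ ≤ -A
  have hstep1 : Vt + V₁ ≤ -A := by
    by_contra hcon
    push_neg at hcon
    have e1 : -deriv g A < deriv g (Vt + V₁) := by
      have := hg' hcon; rwa [hg'_odd] at this
    have e2 : -deriv g (A + V₁) < deriv g Vt := by
      have hlt : -(A + V₁) < Vt := by linarith
      have := hg' hlt; rwa [hg'_odd] at this
    have e3 : deriv g A + deriv g (A + V₁) < deriv g (Vt + V₁ + V₂) := by
      have hlt : x₀ < Vt + V₁ + V₂ := by linarith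
      exact hx₀.trans (hg' hlt)
    linarith
  -- Step 2: g A ≤ g (Vt + V₁)
  have hstep2 : g A ≤ g (Vt + V₁) := by
    have ht := tang (Vt + V₁) (-A)
    rw [hg_even, hg'_odd] at ht
    nlinarith
  -- Step 3: 2 * g ((V₁ + V₂)/2) ≤ g Vt + g (Vt + V₁ + V₂)
  have hstep3 : 2 * g ((V₁ + V₂) / 2) ≤ g Vt + g (Vt + V₁ + V₂) := by
    set m : ℝ := (V₁ + V₂) / 2 with hm
    have ht1 := tang Vt (-m)
    rw [hg_even, hg'_odd] at ht1
    have ht2 := tang (Vt + V₁ + V₂) m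
    have e1 : Vt - -m = Vt + m := by ring
    have e2 : Vt + V₁ + V₂ - m = Vt + m := by rw [hm]; ring
    rw [e1] at ht1; rw [e2] at ht2
    linarith
  linarith
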